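/- Let T > 0 and let f : [0,∞) → ℝ be a continuous bounded function that is S-asymptotically T-periodic and asymptotically almost periodic, i.e. f(t) = g(t) + h(t) for t ≥ 0, where g : ℝ → ℝ is almost periodic and h : [0,∞) → ℝ is continuous with h(t) → 0 as t → +∞. Then f is asymptotically T-periodic: there exist a continuous T-periodic function f₁ : ℝ → ℝ and a continuous function f₂ : [0,∞) → ℝ with f₂(t) → 0 as t → +∞ such that f = f₁ + f₂ on [0,∞). -/

import Mathlib

open Filter Set

/-- A continuous function `g : ℝ → ℝ` is almost periodic in the sense of Bohr if for every
`ε > 0` the set of `ε`-almost periods of `g` is relatively dense in `ℝ`. -/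
def AlmostPeriodic (g : ℝ → ℝ) : Prop :=
  Continuous g ∧
    ∀ ε : ℝ, 0 < ε → ∃ l : ℝ, 0 < l ∧ ∀ a : ℝ,
      ∃ ξ ∈ Icc a (a + l), ∀ t : ℝ, |g (t + ξ) - g t| < ε

/-- An S-asymptotically `T`-periodic, asymptotically almost periodic function on `[0,∞)`
is asymptotically `T`-periodic. -/
theorem s_asymp_and_asymp_almost_periodic_is_asymp_periodic (T : ℝ) (hT : 0 < T)
    (f : ℝ → ℝ) (hf : ContinuousOn f (Ici 0))
    (hbdd : ∃ M : ℝ, ∀ t ∈ Ici (0 : ℝ), |f t| ≤ M)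
    (hsap : Tendsto (fun t : ℝ => f (t + T) - f t) atTop (nhds 0))
    (g h : ℝ → ℝ) (hg : AlmostPeriodic g) (hh : ContinuousOn h (Ici 0))
    (hh0 : Tendsto h atTop (nhds 0))
    (hdecomp : ∀ t ∈ Ici (0 : ℝ), f t = g t + h t) :
    ∃ f₁ f₂ : ℝ → ℝ, Continuous f₁ ∧ Function.Periodic f₁ T ∧
      ContinuousOn f₂ (Ici 0) ∧ Tendsto f₂ atTop (nhds 0) ∧
      ∀ t ∈ Ici (0 : ℝ), f t = f₁ t + f₂ t := by
  obtain ⟨hgc, hgap⟩ := hg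
  have hhT : Tendsto (fun t : ℝ => h (t + T)) atTop (nhds 0) :=
    hh0.comp (tendsto_atTop_add_const_right _ T tendsto_id)
  -- g(t+T) - g(t) → 0 as t → ∞
  have hG : Tendsto (fun t : ℝ => g (t + T) - g t) atTop (nhds 0) := by
    have h1 : Tendsto (fun t : ℝ => (f (t + T) - f t) - (h (t + T) - h t)) atTop (nhds 0) := by
      simpa using hsap.sub (hhT.sub hh0)
    refine h1.congr' ?_
    filter_upwards [eventually_ge_atTop (0 : ℝ)] with t ht
    have e1 := hdecomp t ht
    have e2 := hdecomp (t + T) (by simp only [mem_Ici] at ht ⊢; linarith)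
    simp only [e1, e2]; ring
  -- g is exactly T-periodic
  have hper : Function.Periodic g T := by
    intro t₀
    rw [← sub_eq_zero]
    by_contra hne
    have hpos : 0 < |g (t₀ + T) - g t₀| := abs_pos.mpr hne
    set ε := |g (t₀ + T) - g t₀| with hε
    obtain ⟨N, hN⟩ := (Metric.tendsto_atTop.mp hG (ε / 3) (by positivity))
    obtain ⟨l, hl, hap⟩ := hgap (ε / 3) (by positivity)
    obtain ⟨ξ, hξmem, hξ⟩ := hap (max 0 (N - t₀))
    have hξN : N ≤ t₀ + ξ := by
      have := hξmem.1
      have := le_max_right 0 (N - t₀)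
      linarith
    have h3 := hN (t₀ + ξ) hξN
    rw [Real.dist_eq, sub_zero] at h3
    have e : t₀ + ξ + T = t₀ + T + ξ := by ring
    rw [e] at h3
    have h1 := hξ (t₀ + T)
    have h2 := hξ t₀
    have htri : |g (t₀ + T) - g t₀| ≤
        |g (t₀ + T) - g (t₀ + T + ξ)| + |g (t₀ + T + ξ) - g (t₀ + ξ)| + |g (t₀ + ξ) - g t₀| := by
      calc |g (t₀ + T) - g t₀| ≤ |g (t₀ + T) - g (t₀ + ξ)| + |g (t₀ + ξ) - g t₀| :=
            abs_sub_le _ _ _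
        _ ≤ (|g (t₀ + T) - g (t₀ + T + ξ)| + |g (t₀ + T + ξ) - g (t₀ + ξ)|)
              + |g (t₀ + ξ) - g t₀| := by
            exact add_le_add (abs_sub_le _ _ _) le_rfl
        _ = _ := by ring
    rw [abs_sub_comm] at h1
    have : ε < ε := by
      calc ε ≤ _ := htri
        _ < ε / 3 + ε / 3 + ε / 3 := by
            exact add_lt_add (add_lt_add h1 h3) h2
        _ = ε := by ring
    exact lt_irrefl _ this
  refine ⟨g, fun t => f t - g t, hgc, hper, hf.sub hgc.continuousOn, ?_, fun t ht => by ring⟩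
  refine hh0.congr' ?_
  filter_upwards [eventually_ge_atTop (0 : ℝ)] with t ht
  rw [hdecomp t ht]; ring
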